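/- arXiv:1908.05920 — 2 statements merged into one kernel-verified Lean document; each statement's English description precedes it below -/
import Mathlib

section
/- If κ is η-reflecting for all η < γ and A ⊆ κ is γ'-club in κ with γ' < γ, then A is γ-club in κ. -/
open Set

namespace GenStat

/-- `S` is unbounded in (below) `κ`. -/
def Unbdd (S : Set Ordinal) (κ : Ordinal) : Prop :=
  ∀ β < κ, ∃ α ∈ S, β ≤ α ∧ α < κ

/-- `Stat γ S κ` : `S` is `γ`-stationary in `κ`.  Defined by recursion on `γ`:
`S` is `0`-stationary iff unbounded; `S` is `γ`-stationary iff for every `η < γ`,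
`κ` is `η`-reflecting and `S` meets every `η`-club of `κ`. -/
def Stat (γ : Ordinal) (S : Set Ordinal) (κ : Ordinal) : Prop :=
  (γ = 0 → Unbdd S κ) ∧
  ∀ η < γ,
    (∀ A B : Set Ordinal, A ⊆ Set.Iio κ → B ⊆ Set.Iio κ →
        Stat η A κ → Stat η B κ →
        ∃ α < κ, Stat η (A ∩ Set.Iio α) α ∧ Stat η (B ∩ Set.Iio α) α)
    ∧ (∀ C : Set Ordinal, C ⊆ Set.Iio κ → Stat η C κ →
        (∀ α < κ, Stat η (C ∩ Set.Iio α) α → α ∈ C) →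
        (S ∩ C).Nonempty)
termination_by γ

/-- `κ` is `γ`-reflecting: any two `γ`-stationary subsets of `κ` are simultaneously
`γ`-stationary below some `α < κ`. -/
def Reflecting (γ κ : Ordinal) : Prop :=
  ∀ A B : Set Ordinal, A ⊆ Set.Iio κ → B ⊆ Set.Iio κ →
    Stat γ A κ → Stat γ B κ →
    ∃ α < κ, Stat γ (A ∩ Set.Iio α) α ∧ Stat γ (B ∩ Set.Iio α) α

/-- `C` is `γ`-club in `κ`: `γ`-stationary in `κ` and `γ`-stationary-closed below `κ`. -/
def IsClub (γ : Ordinal) (C : Set Ordinal) (κ : Ordinal) : Prop :=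
  C ⊆ Set.Iio κ ∧ Stat γ C κ ∧ ∀ α < κ, Stat γ (C ∩ Set.Iio α) α → α ∈ C

/-- `d_γ(A)` relative to `κ` : the set of `α < κ` below which `A` is `γ`-stationary. -/
def dSet (γ : Ordinal) (A : Set Ordinal) (κ : Ordinal) : Set Ordinal :=
  {α | α < κ ∧ Stat γ (A ∩ Set.Iio α) α}

/-- If `κ` is `η`-reflecting for all `η < γ` and `A` is `γ'`-club in `κ`
with `γ' < γ`, then `A` is `γ`-club in `κ`. -/
theorem club_mono (κ γ γ' : Ordinal) (A : Set Ordinal)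
    (hrefl : ∀ η < γ, Reflecting η κ) (h : γ' < γ) (hA : IsClub γ' A κ) :
    IsClub γ A κ := by
  obtain ⟨hAsub, hAstat, hAcl⟩ := hA
  have hγ0 : γ ≠ 0 := fun h0 => not_lt_zero (a := γ') (h0 ▸ h)
  refine ⟨hAsub, ?_, ?_⟩
  · rw [Stat]
    refine ⟨fun h0 => absurd h0 hγ0, fun η hη => ⟨hrefl η hη, ?_⟩⟩
    intro C hCsub hCstat hCcl
    rcases lt_trichotomy η γ' with hlt | heq | hgt
    · rw [Stat] at hAstat
      exact (hAstat.2 η hlt).2 C hCsub hCstat hCcl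
    · subst heq
      obtain ⟨α, hακ, hAα, hCα⟩ := hrefl η h A C hAsub hCsub hAstat hCstat
      exact ⟨α, hAcl α hακ hAα, hCcl α hακ hCα⟩
    · rw [Stat] at hCstat
      obtain ⟨x, hxC, hxA⟩ := (hCstat.2 γ' hgt).2 A hAsub hAstat hAcl
      exact ⟨x, hxA, hxC⟩
  · intro α hακ hst
    by_cases hγ' : γ' = 0
    · subst hγ'
      have key : ∀ β, β < κ → β ∈ A := by
        intro β
        induction β using Ordinal.induction with
        | _ β ih =>
          intro hβκ
          apply hAcl β hβκ
          rw [Stat]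
          refine ⟨fun _ => ?_, fun η hη => absurd hη (not_lt_zero (a := η))⟩
          intro b hb
          exact ⟨b, ⟨ih b hb (lt_trans hb hβκ), hb⟩, le_refl b, hb⟩
      exact key α hακ
    · apply hAcl α hακ
      rw [Stat] at hst ⊢
      exact ⟨fun h0 => absurd h0 hγ', fun η hη => hst.2 η (lt_trans hη h)⟩

end GenStat
end

section
/- If S is γ-stationary in κ and C is γ'-club in κ for some γ' < γ, then S ∩ C is γ-stationary in κ. -/
open Set

namespace GenStat

/- ### Auxiliary lemmas -/

theorem stat_iff (γ : Ordinal) (S : Set Ordinal) (κ : Ordinal) : Stat γ S κ ↔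
    (γ = 0 → Unbdd S κ) ∧
    ∀ η < γ, Reflecting η κ
      ∧ (∀ C : Set Ordinal, C ⊆ Set.Iio κ → Stat η C κ →
          (∀ α < κ, Stat η (C ∩ Set.Iio α) α → α ∈ C) →
          (S ∩ C).Nonempty) := by
  rw [Stat]; rfl

theorem stat_intro {γ : Ordinal} {S : Set Ordinal} {κ : Ordinal}
    (h0 : γ = 0 → Unbdd S κ)
    (h1 : ∀ η < γ, Reflecting η κ)
    (h2 : ∀ η < γ, ∀ C : Set Ordinal, C ⊆ Set.Iio κ → Stat η C κ →
        (∀ α < κ, Stat η (C ∩ Set.Iio α) α → α ∈ C) → (S ∩ C).Nonempty) :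
    Stat γ S κ :=
  (stat_iff γ S κ).2 ⟨h0, fun η hη => ⟨h1 η hη, h2 η hη⟩⟩

theorem stat_refl {γ : Ordinal} {S : Set Ordinal} {κ : Ordinal} (h : Stat γ S κ)
    {η : Ordinal} (hη : η < γ) : Reflecting η κ :=
  (((stat_iff γ S κ).1 h).2 η hη).1

theorem stat_meets {γ : Ordinal} {S : Set Ordinal} {κ : Ordinal} (h : Stat γ S κ)
    {η : Ordinal} (hη : η < γ) {C : Set Ordinal} (hC : IsClub η C κ) :
    (S ∩ C).Nonempty :=
  (((stat_iff γ S κ).1 h).2 η hη).2 C hC.1 hC.2.1 hC.2.2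

/-- `Stat` is monotone in the set argument. -/
theorem stat_mono_set {γ : Ordinal} {S T : Set Ordinal} {κ : Ordinal}
    (hST : S ⊆ T) (h : Stat γ S κ) : Stat γ T κ := by
  refine stat_intro (fun h0 => ?_) (fun η hη => stat_refl h hη)
    (fun η hη C hC1 hC2 hC3 => ?_)
  · intro β hβ
    obtain ⟨α, hα, h1, h2⟩ := ((stat_iff γ S κ).1 h).1 h0 β hβ
    exact ⟨α, hST hα, h1, h2⟩
  · obtain ⟨x, hxS, hxC⟩ := (((stat_iff γ S κ).1 h).2 η hη).2 C hC1 hC2 hC3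
    exact ⟨x, hST hxS, hxC⟩

/-- `Stat` is antitone in the ordinal argument (for nonzero target level). -/
theorem stat_mono_ord {ζ η : Ordinal} (hζ : ζ ≠ 0) (hle : ζ ≤ η)
    {S : Set Ordinal} {κ : Ordinal} (h : Stat η S κ) : Stat ζ S κ :=
  stat_intro (fun h0 => absurd h0 hζ)
    (fun θ hθ => stat_refl h (lt_of_lt_of_le hθ hle))
    (fun θ hθ C hC1 hC2 hC3 =>
      (((stat_iff η S κ).1 h).2 θ (lt_of_lt_of_le hθ hle)).2 C hC1 hC2 hC3)

/-- A `0`-club in `κ` contains everything below `κ`. -/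
theorem isClub_zero {C : Set Ordinal} {κ : Ordinal} (hC : IsClub 0 C κ) :
    ∀ α < κ, α ∈ C := by
  intro α
  induction α using Ordinal.induction with
  | h α IH =>
    intro hακ
    refine hC.2.2 α hακ (stat_intro (fun _ β hβ => ?_) ?_ ?_)
    · exact ⟨β, ⟨IH β hβ (hβ.trans hακ), hβ⟩, le_refl β, hβ⟩
    · intro η hη; exact absurd hη (zero_le (a := η)).not_gt
    · intro η hη; exact absurd hη (zero_le (a := η)).not_gt

theorem isClub_zero_eq {C : Set Ordinal} {κ : Ordinal} (hC : IsClub 0 C κ) :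
    C = Set.Iio κ :=
  subset_antisymm hC.1 (fun α hα => isClub_zero hC α hα)

theorem stat_inter_Iio {γ : Ordinal} {S : Set Ordinal} {κ : Ordinal}
    (h : Stat γ S κ) : Stat γ (S ∩ Set.Iio κ) κ := by
  refine stat_intro (fun h0 β hβ => ?_) (fun η hη => stat_refl h hη)
    (fun η hη C hC1 hC2 hC3 => ?_)
  · obtain ⟨α, hα, h1, h2⟩ := ((stat_iff γ S κ).1 h).1 h0 β hβ
    exact ⟨α, ⟨hα, h2⟩, h1, h2⟩
  · obtain ⟨x, hxS, hxC⟩ := (((stat_iff γ S κ).1 h).2 η hη).2 C hC1 hC2 hC3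
    exact ⟨x, ⟨hxS, hC1 hxC⟩, hxC⟩

/-- If `S` is `γ`-stationary in `κ` and `C` is `γ'`-club in `κ` for some
`γ' < γ`, then `S ∩ C` is `γ`-stationary in `κ`. -/
theorem stat_inter_club (κ γ γ' : Ordinal) (S C : Set Ordinal)
    (hS : Stat γ S κ) (h : γ' < γ) (hC : IsClub γ' C κ) :
    Stat γ (S ∩ C) κ := by
  induction γ using Ordinal.induction generalizing κ γ' S C with
  | h γ IH =>
  rcases eq_or_ne γ' 0 with hγ'0 | hγ'0
  · -- γ' = 0 : C = Iio κ
    subst hγ'0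
    rw [isClub_zero_eq hC]
    exact stat_inter_Iio hS
  -- γ' ≠ 0
  refine stat_intro (fun h0 => absurd (h0 ▸ h) (zero_le (a := γ')).not_gt)
    (fun η hη => stat_refl hS hη) (fun η hη D hD1 hD2 hD3 => ?_)
  have hDclub : IsClub η D κ := ⟨hD1, hD2, hD3⟩
  rcases eq_or_ne η 0 with hη0 | hη0
  · -- η = 0 : D = Iio κ
    subst hη0
    obtain ⟨x, hxS, hxC⟩ := stat_meets hS h hC
    exact ⟨x, ⟨hxS, hxC⟩, (isClub_zero_eq hDclub) ▸ (hC.1 hxC)⟩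
  rcases lt_trichotomy γ' η with hlt | heq | hgt
  · -- γ' < η : C ∩ D is an η-club
    have hDC : Stat η (D ∩ C) κ := IH η hη κ γ' D C hD2 hlt hC
    have hclosed : ∀ α < κ, Stat η ((D ∩ C) ∩ Set.Iio α) α → α ∈ D ∩ C := by
      intro α hα hst
      refine ⟨hD3 α hα (stat_mono_set (inter_subset_inter_left _ inter_subset_left) hst),
        hC.2.2 α hα (stat_mono_ord hγ'0 hlt.le
          (stat_mono_set (inter_subset_inter_left _ inter_subset_right) hst))⟩
    obtain ⟨x, hxS, hxD, hxC⟩ := stat_meets hS hη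
      (⟨fun y hy => hD1 hy.1, hDC, hclosed⟩ : IsClub η (D ∩ C) κ)
    exact ⟨x, ⟨hxS, hxC⟩, hxD⟩
  · -- γ' = η : use γ'-reflection of κ
    subst heq
    have hrefl : Reflecting γ' κ := stat_refl hS h
    have hCDclosed : ∀ α < κ, Stat γ' ((C ∩ D) ∩ Set.Iio α) α → α ∈ C ∩ D := by
      intro α hα hst
      exact ⟨hC.2.2 α hα (stat_mono_set (inter_subset_inter_left _ inter_subset_left) hst),
        hD3 α hα (stat_mono_set (inter_subset_inter_left _ inter_subset_right) hst)⟩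
    have hCDstat : Stat γ' (C ∩ D) κ := by
      refine stat_intro (fun h0 => absurd h0 hγ'0)
        (fun ζ hζ => stat_refl hC.2.1 hζ) (fun ζ hζ E hE1 hE2 hE3 => ?_)
      have hEclub : IsClub ζ E κ := ⟨hE1, hE2, hE3⟩
      rcases eq_or_ne ζ 0 with hζ0 | hζ0
      · -- E = Iio κ : reflect C and D
        subst hζ0
        obtain ⟨α, hα, hA, hB⟩ := hrefl C D hC.1 hD1 hC.2.1 hD2
        exact ⟨α, ⟨hC.2.2 α hα hA, hD3 α hα hB⟩, (isClub_zero_eq hEclub) ▸ hα⟩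
      · -- D ∩ E is a γ'-club; reflect C and D ∩ E
        have hDE : Stat γ' (D ∩ E) κ := IH γ' h κ ζ D E hD2 hζ hEclub
        have hDEclosed : ∀ α < κ, Stat γ' ((D ∩ E) ∩ Set.Iio α) α → α ∈ D ∩ E := by
          intro α hα hst
          exact ⟨hD3 α hα (stat_mono_set (inter_subset_inter_left _ inter_subset_left) hst),
            hE3 α hα (stat_mono_ord hζ0 hζ.le
              (stat_mono_set (inter_subset_inter_left _ inter_subset_right) hst))⟩
        obtain ⟨α, hα, hA, hB⟩ := hrefl C (D ∩ E) hC.1 (fun y hy => hD1 hy.1) hC.2.1 hDE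
        obtain ⟨hαD, hαE⟩ := hDEclosed α hα hB
        exact ⟨α, ⟨hC.2.2 α hα hA, hαD⟩, hαE⟩
    obtain ⟨x, hxS, hxC, hxD⟩ := stat_meets hS h
      (⟨fun y hy => hC.1 hy.1, hCDstat, hCDclosed⟩ : IsClub γ' (C ∩ D) κ)
    exact ⟨x, ⟨hxS, hxC⟩, hxD⟩
  · -- η < γ' : C ∩ D is a γ'-club
    have hCD : Stat γ' (C ∩ D) κ := IH γ' h κ η C D hC.2.1 hgt hDclub
    have hclosed : ∀ α < κ, Stat γ' ((C ∩ D) ∩ Set.Iio α) α → α ∈ C ∩ D := by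
      intro α hα hst
      exact ⟨hC.2.2 α hα (stat_mono_set (inter_subset_inter_left _ inter_subset_left) hst),
        hD3 α hα (stat_mono_ord hη0 hgt.le
          (stat_mono_set (inter_subset_inter_left _ inter_subset_right) hst))⟩
    obtain ⟨x, hxS, hxC, hxD⟩ := stat_meets hS h
      (⟨fun y hy => hC.1 hy.1, hCD, hclosed⟩ : IsClub γ' (C ∩ D) κ)
    exact ⟨x, ⟨hxS, hxC⟩, hxD⟩

end GenStat
end
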